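/- Equivariance of the prequantization connection (Lemma: 'for any prequantization representation of A on a line bundle L → S, the given connection ∇ on L is A-equivariant, i.e. [π(X), ∇_v] = ∇_{[α(X), v]}'): Let L be an A-module, let V, ∇, Ω be as in the context, and let μ : g → A be an ℝ-linear map satisfying the quantization condition. Define π(X)(s) := ∇(α(X))(s) − ((2πi) • μ(X)) • s. Then π(X) ∘ ∇(v) − ∇(v) ∘ π(X) = ∇([α(X), v]) for all X ∈ g and v ∈ V. -/
import Mathlib


/-- **Equivariance of the prequantization connection.**
For the Kostant operator `π(X) s = ∇(α X) s − ((2πi) • μ(X)) • s` built from a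
partial connection `∇` with curvature `Ω` and a momentum `μ` satisfying the
quantization condition, one has `[π(X), ∇_v] = ∇_{[α X, v]}` for all `X ∈ g` and
`v ∈ V`. -/
theorem prequantization_connection_equivariant
    {A : Type*} [CommRing A] [Algebra ℂ A]
    {g : Type*} [LieRing g] [LieAlgebra ℝ g]
    {L : Type*} [AddCommGroup L] [Module A L] [Module ℝ L]
    (α : g →ₗ[ℝ] Derivation ℂ A A)
    (hα : ∀ (X Y : g) (a : A), α ⁅X, Y⁆ a = α X (α Y a) - α Y (α X a))
    (V : Set (Derivation ℂ A A))
    (hVadd : ∀ v ∈ V, ∀ w ∈ V, v + w ∈ V)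
    (hVsmul : ∀ (r : ℝ), ∀ v ∈ V, r • v ∈ V)
    (hVlie : ∀ v ∈ V, ∀ w ∈ V, ⁅v, w⁆ ∈ V)
    (hαV : ∀ X : g, α X ∈ V)
    (nabla : Derivation ℂ A A → L →ₗ[ℝ] L)
    (hnabla : ∀ v ∈ V, ∀ (a : A) (s : L), nabla v (a • s) = a • nabla v s + v a • s)
    (Ω : Derivation ℂ A A → Derivation ℂ A A → A)
    (hΩalt : ∀ v ∈ V, Ω v v = 0)
    (hΩanti : ∀ v ∈ V, ∀ w ∈ V, Ω v w = - Ω w v)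
    (hcurv : ∀ v ∈ V, ∀ w ∈ V, ∀ s : L,
      nabla v (nabla w s) - nabla w (nabla v s) - nabla ⁅v, w⁆ s
        = ((2 * (Real.pi : ℂ) * Complex.I) • Ω v w) • s)
    (μ : g →ₗ[ℝ] A)
    (hquant : ∀ (X : g), ∀ v ∈ V, v (μ X) = - Ω (α X) v)
    (π : g → L → L)
    (hπ : ∀ (X : g) (s : L),
      π X s = nabla (α X) s - ((2 * (Real.pi : ℂ) * Complex.I) • μ X) • s) :
    ∀ (X : g), ∀ v ∈ V, ∀ s : L,
      π X (nabla v s) - nabla v (π X s) = nabla ⁅α X, v⁆ s := by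
  intro X v hv s
  have hc := hcurv (α X) (hαV X) v hv s
  have hq := hquant X v hv
  rw [hπ, hπ, map_sub, hnabla v hv]
  have hvsmul : v ((2 * (Real.pi : ℂ) * Complex.I) • μ X)
      = (2 * (Real.pi : ℂ) * Complex.I) • v (μ X) := by
    simp
  rw [hvsmul, hq]
  have : nabla (α X) (nabla v s) - nabla v (nabla (α X) s)
      = nabla ⁅α X, v⁆ s + ((2 * (Real.pi : ℂ) * Complex.I) • Ω (α X) v) • s := by
    rw [← hc]; abel
  rw [smul_neg, neg_smul]
  have h3 : ∀ (a b d n f : L), a - d = n + f → a - b - (d - (b + -f)) = n := by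
    intro a b d n f h
    rw [sub_eq_iff_eq_add] at h; rw [h]; abel
  exact h3 _ _ _ _ _ this
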